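/- Let n ≥ 1 and let V : ℝ → ℝ be continuous with lim_{x→±∞} V(x)/(|x|+1) = +∞. Define Z'_n := ∫_{ℝⁿ} ∏_{1≤i<j≤n}(λ_j − λ_i)(e^{λ_j} − e^{λ_i}) · ∏_{j=1}^n e^{−nV(λ_j)} dλ₁⋯dλ_n, and for z ∈ ℝ define E_n(z) := ∫_{ℝⁿ} ∏_{j=1}^n (e^z − e^{λ_j}) · ∏_{1≤i<j≤n}(λ_j − λ_i)(e^{λ_j} − e^{λ_i}) · ∏_{j=1}^n e^{−nV(λ_j)} dλ₁⋯dλ_n. Then all these integrals are finite, Z'_n > 0, there is a polynomial Q with real coefficients, degree n and leading coefficient Z'_n such that E_n(z) = Q(e^z) for all z ∈ ℝ, and ∫_ℝ x^k E_n(x) e^{−nV(x)} dx = 0 for every k ∈ {0, 1, …, n−1}. Consequently, (1/Z'_n)·E_n(z) = q_n(e^z), where q_n is any monic degree-n polynomial satisfying the orthogonality conditions ∫_ℝ x^k q_n(e^x) e^{−nV(x)} dx = 0 for k = 0, …, n−1, provided such a q_n is unique. -/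

import Mathlib

open MeasureTheory Filter

/-- The eigenvalue weight `∏_{i<j}(λ_j − λ_i)(e^{λ_j} − e^{λ_i}) ∏_j e^{−nV(λ_j)}` of the
equispaced external source model. -/
noncomputable def eigWeight (V : ℝ → ℝ) (n : ℕ) (lam : Fin n → ℝ) : ℝ :=
  (∏ p ∈ Finset.univ.filter (fun p : Fin n × Fin n => p.1 < p.2),
      ((lam p.2 - lam p.1) * (Real.exp (lam p.2) - Real.exp (lam p.1))))
    * ∏ j, Real.exp (-(n : ℝ) * V (lam j))

/-- The normalization constant `Z'_n`. -/
noncomputable def Zn (V : ℝ → ℝ) (n : ℕ) : ℝ :=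
  ∫ lam : Fin n → ℝ, eigWeight V n lam

/-- The unnormalized average `E_n(z) = ∫ ∏_j (e^z − e^{λ_j}) · weight(λ) dλ`. -/
noncomputable def En (V : ℝ → ℝ) (n : ℕ) (z : ℝ) : ℝ :=
  ∫ lam : Fin n → ℝ, (∏ j, (Real.exp z - Real.exp (lam j))) * eigWeight V n lam

namespace AvgAux

lemma prod_pairs {M : Type*} [CommMonoid M] {m : ℕ} (f : Fin m → Fin m → M) :
    (∏ p ∈ Finset.univ.filter (fun p : Fin m × Fin m => p.1 < p.2), f p.1 p.2)
      = ∏ i, ∏ j ∈ Finset.Ioi i, f i j := by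
  rw [Finset.prod_sigma']
  refine Finset.prod_nbij (fun p => ⟨p.1, p.2⟩) ?_ ?_ ?_ ?_
  · intro p hp
    simp only [Finset.mem_filter, Finset.mem_univ, true_and] at hp
    simp [Finset.mem_sigma, Finset.mem_Ioi, hp]
  · intro p hp q hq h
    have h1 : p.1 = q.1 := congrArg Sigma.fst h
    have h2 : p.2 = q.2 := congrArg Sigma.snd h
    exact Prod.ext h1 h2
  · intro x hx
    simp only [Finset.mem_coe, Finset.mem_sigma, Finset.mem_univ, Finset.mem_Ioi, true_and] at hx
    exact ⟨(x.1, x.2), by simp [Finset.mem_coe, hx], rfl⟩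
  · intro p hp; rfl

lemma vand {m : ℕ} (v : Fin m → ℝ) :
    (∏ i, ∏ j ∈ Finset.Ioi i, (v j - v i))
      = ∑ σ : Equiv.Perm (Fin m), ((Equiv.Perm.sign σ : ℤ) : ℝ) * ∏ i, v i ^ (σ i : ℕ) := by
  rw [← Matrix.det_vandermonde, ← Matrix.det_transpose, Matrix.det_apply]
  refine Finset.sum_congr rfl fun σ _ => ?_
  simp [Matrix.vandermonde, Units.smul_def, zsmul_eq_mul]

lemma Ioi_zero_fin (m : ℕ) :
    Finset.Ioi (0 : Fin (m+1)) = Finset.univ.map (Fin.succEmb m) := by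
  ext j
  simp [Finset.mem_Ioi, Fin.pos_iff_ne_zero, Fin.exists_succ_eq, Fin.succEmb]

lemma Ioi_succ_fin {m : ℕ} (i : Fin m) :
    Finset.Ioi i.succ = (Finset.Ioi i).map (Fin.succEmb m) := by
  ext j
  simp only [Finset.mem_Ioi, Finset.mem_map, Fin.succEmb, Function.Embedding.coeFn_mk]
  constructor
  · intro h
    obtain ⟨y, rfl⟩ := Fin.exists_succ_eq.mpr (Fin.pos_iff_ne_zero.mp (lt_trans (Fin.succ_pos i) h))
    exact ⟨y, Fin.succ_lt_succ_iff.mp h, rfl⟩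
  · rintro ⟨y, hy, rfl⟩
    exact Fin.succ_lt_succ_iff.mpr hy

lemma vand_cons {m : ℕ} (w : ℝ) (u : Fin m → ℝ) :
    (∏ i : Fin (m+1), ∏ j ∈ Finset.Ioi i, ((Fin.cons w u : Fin (m+1) → ℝ) j - (Fin.cons w u : Fin (m+1) → ℝ) i))
      = (∏ j, (u j - w)) * ∏ i : Fin m, ∏ j ∈ Finset.Ioi i, (u j - u i) := by
  rw [Fin.prod_univ_succ]
  congr 1
  · rw [Ioi_zero_fin, Finset.prod_map]
    simp [Fin.succEmb]
  · refine Finset.prod_congr rfl fun i _ => ?_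
    rw [Ioi_succ_fin, Finset.prod_map]
    simp [Fin.succEmb]


lemma exp_neg_abs_int : Integrable (fun x : ℝ => Real.exp (-|x|)) := by
  have h1 : IntegrableOn (fun x : ℝ => Real.exp (-|x|)) (Set.Ioi 0) := by
    have := exp_neg_integrableOn_Ioi 0 (one_pos (α := ℝ))
    refine this.congr_fun (fun x hx => ?_) measurableSet_Ioi
    rw [abs_of_pos hx]; ring_nf
  have h2 : IntegrableOn (fun x : ℝ => Real.exp (-|x|)) (Set.Iic 0) := by
    have := integrableOn_exp_Iic 0
    refine this.congr_fun (fun x hx => ?_) measurableSet_Iic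
    rw [abs_of_nonpos hx, neg_neg]
  have := h2.union h1
  rwa [Set.Iic_union_Ioi, integrableOn_univ] at this

lemma pow_le_factorial_mul_exp (a : ℕ) {y : ℝ} (hy : 0 ≤ y) :
    y ^ a ≤ (a.factorial : ℝ) * Real.exp y := by
  have h1 : y ^ a / (a.factorial : ℝ) ≤ ∑ i ∈ Finset.range (a + 1), y ^ i / i.factorial := by
    refine Finset.single_le_sum (f := fun i => y ^ i / (i.factorial : ℝ)) ?_ ?_
    · intro i _; positivity
    · simp
  have h2 := Real.sum_le_exp_of_nonneg hy (a + 1)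
  have h3 : y ^ a / (a.factorial : ℝ) ≤ Real.exp y := le_trans h1 h2
  have hfac : (0:ℝ) < (a.factorial : ℝ) := by positivity
  calc y ^ a = y ^ a / (a.factorial : ℝ) * (a.factorial : ℝ) := by field_simp
    _ ≤ Real.exp y * (a.factorial : ℝ) := by gcongr
    _ = (a.factorial : ℝ) * Real.exp y := mul_comm _ _

lemma core_int (n : ℕ) (hn : 1 ≤ n) (V : ℝ → ℝ) (hcont : Continuous V)
    (hg1 : Tendsto (fun x => V x / (|x| + 1)) atTop atTop)
    (hg2 : Tendsto (fun x => V x / (|x| + 1)) atBot atTop)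
    (a : ℕ) (b : ℝ) :
    Integrable (fun t : ℝ => t ^ a * Real.exp (b * t) * Real.exp (-(n : ℝ) * V t)) := by
  have hnpos : (0:ℝ) < n := by exact_mod_cast hn
  set c : ℝ := |b| + a + 2 with hc
  have hnV1 : Tendsto (fun x => (n:ℝ) * V x / (|x| + 1)) atTop atTop := by
    simp_rw [mul_div_assoc]; exact hg1.const_mul_atTop hnpos
  have hnV2 : Tendsto (fun x => (n:ℝ) * V x / (|x| + 1)) atBot atTop := by
    simp_rw [mul_div_assoc]; exact hg2.const_mul_atTop hnpos
  obtain ⟨A, hA⟩ := eventually_atTop.mp (hnV1.eventually_ge_atTop c)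
  obtain ⟨B, hB⟩ := eventually_atBot.mp (hnV2.eventually_ge_atTop c)
  have hφ : Continuous fun x : ℝ => c * (|x| + 1) - (n:ℝ) * V x := by fun_prop
  obtain ⟨C0, hC0⟩ := (isCompact_Icc (a := B) (b := A)).bddAbove_image hφ.continuousOn
  set C : ℝ := max C0 0 with hCdef
  have hCnn : (0:ℝ) ≤ C := le_max_right _ _
  have habs : ∀ x : ℝ, (0:ℝ) < |x| + 1 := fun x => by positivity
  have hbound : ∀ x : ℝ, c * (|x| + 1) - C ≤ (n:ℝ) * V x := by
    intro x
    rcases le_total A x with h | h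
    · have := hA x h
      have := (le_div_iff₀ (habs x)).mp this
      linarith
    rcases le_total x B with h' | h'
    · have := hB x h'
      have := (le_div_iff₀ (habs x)).mp this
      linarith
    · have hmem : x ∈ Set.Icc B A := ⟨h', h⟩
      have := hC0 (Set.mem_image_of_mem _ hmem)
      have hC0C : C0 ≤ C := le_max_left _ _
      linarith
  set K : ℝ := (a.factorial : ℝ) * Real.exp (C - c) with hK
  have hbd : ∀ t : ℝ, ‖t ^ a * Real.exp (b * t) * Real.exp (-(n:ℝ) * V t)‖
      ≤ K * Real.exp (-|t|) := by
    intro t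
    have h1 : |t| ^ a ≤ (a.factorial : ℝ) * Real.exp |t| :=
      pow_le_factorial_mul_exp a (abs_nonneg t)
    have h2 : Real.exp (b * t) ≤ Real.exp (|b| * |t|) := by
      apply Real.exp_le_exp.mpr
      calc b * t ≤ |b * t| := le_abs_self _
        _ = |b| * |t| := abs_mul _ _
    have h3 : Real.exp (-(n:ℝ) * V t) ≤ Real.exp (C - c * (|t| + 1)) := by
      apply Real.exp_le_exp.mpr
      have := hbound t
      linarith
    calc ‖t ^ a * Real.exp (b * t) * Real.exp (-(n:ℝ) * V t)‖
        = |t| ^ a * Real.exp (b * t) * Real.exp (-(n:ℝ) * V t) := by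
          rw [Real.norm_eq_abs, abs_mul, abs_mul, abs_pow,
            abs_of_pos (Real.exp_pos _), abs_of_pos (Real.exp_pos _)]
      _ ≤ ((a.factorial : ℝ) * Real.exp |t|) * Real.exp (|b| * |t|)
            * Real.exp (C - c * (|t| + 1)) := by
          refine mul_le_mul (mul_le_mul h1 h2 (Real.exp_pos _).le (by positivity)) h3
            (Real.exp_pos _).le (by positivity)
      _ = (a.factorial : ℝ) * Real.exp (|t| + |b| * |t| + (C - c * (|t| + 1))) := by
          rw [Real.exp_add, Real.exp_add]; ring
      _ ≤ K * Real.exp (-|t|) := by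
          rw [hK, mul_assoc, ← Real.exp_add]
          refine mul_le_mul_of_nonneg_left (Real.exp_le_exp.mpr ?_) (by positivity)
          have h4 : (0:ℝ) ≤ (a:ℝ) * |t| := by positivity
          rw [hc]
          nlinarith [abs_nonneg t]
  refine Integrable.mono' (exp_neg_abs_int.const_mul K) ?_ (Eventually.of_forall hbd)
  exact (((continuous_pow a).mul ((continuous_const.mul continuous_id).rexp)).mul
    ((continuous_const.mul hcont).rexp)).aestronglyMeasurable


section Expand

variable {n : ℕ} (V : ℝ → ℝ)

lemma term_merge' (lam : Fin n → ℝ) (t : Fin n → ℕ) (s : Fin n → ℝ) :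
    ((∏ j, lam j ^ t j) * (∏ j, Real.exp (s j * lam j)) *
      ∏ j, Real.exp (-(n : ℝ) * V (lam j)))
      = ∏ j, (lam j ^ t j * Real.exp (s j * lam j) * Real.exp (-(n : ℝ) * V (lam j))) := by
  rw [← Finset.prod_mul_distrib, ← Finset.prod_mul_distrib]

lemma eig_split (lam : Fin n → ℝ) :
    eigWeight V n lam
      = ((∏ i, ∏ j ∈ Finset.Ioi i, (lam j - lam i)) *
          (∏ i, ∏ j ∈ Finset.Ioi i, (Real.exp (lam j) - Real.exp (lam i)))) *
        ∏ j, Real.exp (-(n : ℝ) * V (lam j)) := by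
  rw [eigWeight, Finset.prod_mul_distrib]
  congr 1
  congr 1
  · exact prod_pairs (fun i j => lam j - lam i)
  · exact prod_pairs (fun i j => Real.exp (lam j) - Real.exp (lam i))

lemma weight_expand (e : Fin n → ℝ) (lam : Fin n → ℝ) :
    (∏ j, Real.exp (e j * lam j)) * eigWeight V n lam
      = ∑ p : Equiv.Perm (Fin n) × Equiv.Perm (Fin n),
          (((Equiv.Perm.sign p.1 : ℤ) : ℝ) * ((Equiv.Perm.sign p.2 : ℤ) : ℝ)) *
          ∏ j, (lam j ^ (p.1 j : ℕ) *
                Real.exp ((((p.2 j : ℕ) : ℝ) + e j) * lam j) *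
                Real.exp (-(n : ℝ) * V (lam j))) := by
  rw [eig_split, vand lam, vand (fun j => Real.exp (lam j)), Fintype.sum_prod_type,
    Finset.sum_mul_sum, Finset.sum_mul, Finset.mul_sum]
  refine Finset.sum_congr rfl fun τ _ => ?_
  rw [Finset.sum_mul, Finset.mul_sum]
  refine Finset.sum_congr rfl fun σ _ => ?_
  have hmerge := term_merge' V lam (fun j => (τ j : ℕ))
      (fun j => ((σ j : ℕ) : ℝ) + e j)
  rw [← hmerge]
  have hexp : ∀ j, Real.exp ((((σ j : ℕ) : ℝ) + e j) * lam j)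
      = Real.exp (lam j) ^ (σ j : ℕ) * Real.exp (e j * lam j) := by
    intro j
    rw [add_mul, Real.exp_add, Real.exp_nat_mul]
  rw [Finset.prod_congr rfl (fun j _ => hexp j), Finset.prod_mul_distrib]
  ring

end Expand

section ExpandE

variable {n : ℕ} (V : ℝ → ℝ)

lemma mu_pow (z : ℝ) (lam : Fin n → ℝ) (σ : Equiv.Perm (Fin (n + 1))) :
    (∏ i : Fin (n + 1),
        (Fin.cons (Real.exp z) (fun j => Real.exp (lam j)) : Fin (n + 1) → ℝ) i ^ (σ i : ℕ))
      = Real.exp (((σ 0 : ℕ) : ℝ) * z) *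
          ∏ j : Fin n, Real.exp (((σ j.succ : ℕ) : ℝ) * lam j) := by
  rw [Fin.prod_univ_succ]
  simp only [Fin.cons_zero, Fin.cons_succ, ← Real.exp_nat_mul]

lemma E_expand (z : ℝ) (lam : Fin n → ℝ) :
    (∏ j, (Real.exp z - Real.exp (lam j))) * eigWeight V n lam
      = ∑ p : Equiv.Perm (Fin (n + 1)) × Equiv.Perm (Fin n),
          ((-1 : ℝ) ^ n * ((Equiv.Perm.sign p.1 : ℤ) : ℝ) * ((Equiv.Perm.sign p.2 : ℤ) : ℝ)) *
          Real.exp (((p.1 0 : ℕ) : ℝ) * z) *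
          ∏ j, (lam j ^ (p.2 j : ℕ) * Real.exp (((p.1 j.succ : ℕ) : ℝ) * lam j) *
                Real.exp (-(n : ℝ) * V (lam j))) := by
  have hstep1 : (∏ j, (Real.exp z - Real.exp (lam j)))
      = (-1 : ℝ) ^ n * ∏ j, (Real.exp (lam j) - Real.exp z) := by
    calc (∏ j, (Real.exp z - Real.exp (lam j)))
        = ∏ j, (-1 : ℝ) * (Real.exp (lam j) - Real.exp z) :=
          Finset.prod_congr rfl fun j _ => by ring
      _ = (∏ _j : Fin n, (-1 : ℝ)) * ∏ j, (Real.exp (lam j) - Real.exp z) :=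
          Finset.prod_mul_distrib
      _ = (-1 : ℝ) ^ n * ∏ j, (Real.exp (lam j) - Real.exp z) := by
          rw [Finset.prod_const, Finset.card_univ, Fintype.card_fin]
  have hcons := vand_cons (Real.exp z) (fun j => Real.exp (lam j))
  have hv := vand (Fin.cons (Real.exp z) (fun j => Real.exp (lam j)) : Fin (n + 1) → ℝ)
  calc (∏ j, (Real.exp z - Real.exp (lam j))) * eigWeight V n lam
      = ((-1 : ℝ) ^ n * ∏ j, (Real.exp (lam j) - Real.exp z)) *
          (((∏ i, ∏ j ∈ Finset.Ioi i, (lam j - lam i)) *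
            (∏ i, ∏ j ∈ Finset.Ioi i, (Real.exp (lam j) - Real.exp (lam i)))) *
           ∏ j, Real.exp (-(n : ℝ) * V (lam j))) := by rw [eig_split, hstep1]
    _ = (-1 : ℝ) ^ n *
          (((∏ j, (Real.exp (lam j) - Real.exp z)) *
            ∏ i, ∏ j ∈ Finset.Ioi i, (Real.exp (lam j) - Real.exp (lam i))) *
           ((∏ i, ∏ j ∈ Finset.Ioi i, (lam j - lam i)) *
            ∏ j, Real.exp (-(n : ℝ) * V (lam j)))) := by ring
    _ = (-1 : ℝ) ^ n *
          ((∑ σ : Equiv.Perm (Fin (n + 1)), ((Equiv.Perm.sign σ : ℤ) : ℝ) *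
              ∏ i, (Fin.cons (Real.exp z) (fun j => Real.exp (lam j)) : Fin (n + 1) → ℝ) i
                ^ (σ i : ℕ)) *
           ((∑ τ : Equiv.Perm (Fin n), ((Equiv.Perm.sign τ : ℤ) : ℝ) * ∏ i, lam i ^ (τ i : ℕ)) *
            ∏ j, Real.exp (-(n : ℝ) * V (lam j)))) := by rw [← hcons, hv, vand lam]
    _ = ∑ p : Equiv.Perm (Fin (n + 1)) × Equiv.Perm (Fin n),
          ((-1 : ℝ) ^ n * ((Equiv.Perm.sign p.1 : ℤ) : ℝ) * ((Equiv.Perm.sign p.2 : ℤ) : ℝ)) *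
          Real.exp (((p.1 0 : ℕ) : ℝ) * z) *
          ∏ j, (lam j ^ (p.2 j : ℕ) * Real.exp (((p.1 j.succ : ℕ) : ℝ) * lam j) *
                Real.exp (-(n : ℝ) * V (lam j))) := by
        rw [Fintype.sum_prod_type, Finset.sum_mul, Finset.mul_sum]
        refine Finset.sum_congr rfl fun σ _ => ?_
        rw [Finset.sum_mul, Finset.mul_sum, Finset.mul_sum]
        refine Finset.sum_congr rfl fun τ _ => ?_
        rw [mu_pow z lam σ,
          ← term_merge' V lam (fun j => (τ j : ℕ)) (fun j => ((σ j.succ : ℕ) : ℝ))]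
        ring
  
end ExpandE

section IntParts

variable {n : ℕ} {V : ℝ → ℝ} (hn : 1 ≤ n) (hcont : Continuous V)
  (hg1 : Tendsto (fun x => V x / (|x| + 1)) atTop atTop)
  (hg2 : Tendsto (fun x => V x / (|x| + 1)) atBot atTop)

/-- moments -/
noncomputable def MM (n : ℕ) (V : ℝ → ℝ) (a b : ℕ) : ℝ :=
  ∫ t : ℝ, t ^ a * Real.exp ((b : ℝ) * t) * Real.exp (-(n : ℝ) * V t)

include hn hcont hg1 hg2

lemma prod_int {m : ℕ} (a : Fin m → ℕ) (b : Fin m → ℝ) :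
    Integrable (fun lam : Fin m → ℝ =>
      ∏ j, (lam j ^ a j * Real.exp (b j * lam j) * Real.exp (-(n : ℝ) * V (lam j)))) :=
  Integrable.fintype_prod (f := fun j t => t ^ a j * Real.exp (b j * t) *
    Real.exp (-(n : ℝ) * V t)) (fun j => core_int n hn V hcont hg1 hg2 (a j) (b j))

lemma weightMul_int (e : Fin n → ℝ) :
    Integrable (fun lam : Fin n → ℝ =>
      (∏ j, Real.exp (e j * lam j)) * eigWeight V n lam) := by
  have hfe : (fun lam : Fin n → ℝ => (∏ j, Real.exp (e j * lam j)) * eigWeight V n lam)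
      = fun lam => ∑ p : Equiv.Perm (Fin n) × Equiv.Perm (Fin n),
          (((Equiv.Perm.sign p.1 : ℤ) : ℝ) * ((Equiv.Perm.sign p.2 : ℤ) : ℝ)) *
          ∏ j, (lam j ^ (p.1 j : ℕ) *
                Real.exp ((((p.2 j : ℕ) : ℝ) + e j) * lam j) *
                Real.exp (-(n : ℝ) * V (lam j))) := funext fun lam => weight_expand V e lam
  rw [hfe]
  exact integrable_finset_sum _ fun p _ =>
    (prod_int hn hcont hg1 hg2 (fun j => (p.1 j : ℕ))
      (fun j => ((p.2 j : ℕ) : ℝ) + e j)).const_mul _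

lemma eig_int : Integrable (eigWeight V n) := by
  have := weightMul_int hn hcont hg1 hg2 (fun _ => 0)
  simpa using this

lemma Eint (z : ℝ) :
    Integrable (fun lam : Fin n → ℝ =>
      (∏ j, (Real.exp z - Real.exp (lam j))) * eigWeight V n lam) := by
  have hfe : (fun lam : Fin n → ℝ =>
        (∏ j, (Real.exp z - Real.exp (lam j))) * eigWeight V n lam)
      = fun lam => ∑ p : Equiv.Perm (Fin (n + 1)) × Equiv.Perm (Fin n),
          ((-1 : ℝ) ^ n * ((Equiv.Perm.sign p.1 : ℤ) : ℝ) * ((Equiv.Perm.sign p.2 : ℤ) : ℝ)) *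
          Real.exp (((p.1 0 : ℕ) : ℝ) * z) *
          ∏ j, (lam j ^ (p.2 j : ℕ) * Real.exp (((p.1 j.succ : ℕ) : ℝ) * lam j) *
                Real.exp (-(n : ℝ) * V (lam j))) := funext fun lam => E_expand V z lam
  rw [hfe]
  exact integrable_finset_sum _ fun p _ =>
    (prod_int hn hcont hg1 hg2 (fun j => (p.2 j : ℕ))
      (fun j => ((p.1 j.succ : ℕ) : ℝ))).const_mul _

lemma En_eq (z : ℝ) :
    En V n z = ∑ p : Equiv.Perm (Fin (n + 1)) × Equiv.Perm (Fin n),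
      ((-1 : ℝ) ^ n * ((Equiv.Perm.sign p.1 : ℤ) : ℝ) * ((Equiv.Perm.sign p.2 : ℤ) : ℝ)) *
      Real.exp (((p.1 0 : ℕ) : ℝ) * z) *
      ∏ j, MM n V (p.2 j) (p.1 j.succ) := by
  rw [En]
  rw [show (fun lam : Fin n → ℝ =>
        (∏ j, (Real.exp z - Real.exp (lam j))) * eigWeight V n lam)
      = fun lam => ∑ p : Equiv.Perm (Fin (n + 1)) × Equiv.Perm (Fin n),
          ((-1 : ℝ) ^ n * ((Equiv.Perm.sign p.1 : ℤ) : ℝ) * ((Equiv.Perm.sign p.2 : ℤ) : ℝ)) *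
          Real.exp (((p.1 0 : ℕ) : ℝ) * z) *
          ∏ j, (lam j ^ (p.2 j : ℕ) * Real.exp (((p.1 j.succ : ℕ) : ℝ) * lam j) *
                Real.exp (-(n : ℝ) * V (lam j)))
      from funext fun lam => E_expand V z lam]
  rw [integral_finset_sum _ fun p _ =>
    (prod_int hn hcont hg1 hg2 (fun j => (p.2 j : ℕ))
      (fun j => ((p.1 j.succ : ℕ) : ℝ))).const_mul _]
  refine Finset.sum_congr rfl fun p _ => ?_
  rw [integral_const_mul]
  congr 1
  exact MeasureTheory.integral_fintype_prod_eq_prod (ι := Fin n)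
    (f := fun j t => t ^ (p.2 j : ℕ) * Real.exp (((p.1 j.succ : ℕ) : ℝ) * t) *
      Real.exp (-(n : ℝ) * V t))

lemma orth (k : ℕ) (hk : k < n) :
    ∫ x : ℝ, x ^ k * En V n x * Real.exp (-(n : ℝ) * V x) = 0 := by
  have hfun : (fun x : ℝ => x ^ k * En V n x * Real.exp (-(n : ℝ) * V x))
      = fun x => ∑ p : Equiv.Perm (Fin (n + 1)) × Equiv.Perm (Fin n),
          (((-1 : ℝ) ^ n * ((Equiv.Perm.sign p.1 : ℤ) : ℝ) * ((Equiv.Perm.sign p.2 : ℤ) : ℝ)) *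
            ∏ j, MM n V (p.2 j) (p.1 j.succ)) *
          (x ^ k * Real.exp (((p.1 0 : ℕ) : ℝ) * x) * Real.exp (-(n : ℝ) * V x)) := by
    funext x
    rw [En_eq hn hcont hg1 hg2 x, Finset.mul_sum, Finset.sum_mul]
    exact Finset.sum_congr rfl fun p _ => by ring
  rw [hfun]
  rw [integral_finset_sum _ fun p _ =>
    (core_int n hn V hcont hg1 hg2 k ((p.1 0 : ℕ) : ℝ)).const_mul _]
  have hval : ∀ p : Equiv.Perm (Fin (n + 1)) × Equiv.Perm (Fin n),
      (∫ x : ℝ, (((-1 : ℝ) ^ n * ((Equiv.Perm.sign p.1 : ℤ) : ℝ) *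
          ((Equiv.Perm.sign p.2 : ℤ) : ℝ)) * ∏ j, MM n V (p.2 j) (p.1 j.succ)) *
          (x ^ k * Real.exp (((p.1 0 : ℕ) : ℝ) * x) * Real.exp (-(n : ℝ) * V x)))
      = (((-1 : ℝ) ^ n * ((Equiv.Perm.sign p.1 : ℤ) : ℝ) * ((Equiv.Perm.sign p.2 : ℤ) : ℝ)) *
          ∏ j, MM n V (p.2 j) (p.1 j.succ)) * MM n V k ((p.1 0 : ℕ)) := by
    intro p
    rw [integral_const_mul]
    rfl
  rw [Finset.sum_congr rfl fun p _ => hval p]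
  -- now a purely algebraic cancellation
  rw [Fintype.sum_prod_type_right]
  refine Finset.sum_eq_zero fun τ _ => ?_
  set D : Matrix (Fin (n + 1)) (Fin (n + 1)) ℝ :=
    fun i b => MM n V ((Fin.cons k (fun j => (τ j : ℕ)) : Fin (n + 1) → ℕ) i) (b : ℕ) with hD
  have hterm : ∀ σ : Equiv.Perm (Fin (n + 1)),
      (∏ j, MM n V (τ j) (σ j.succ)) * MM n V k ((σ 0 : Fin (n + 1)) : ℕ)
        = ∏ i, D i (σ i) := by
    intro σ
    rw [Fin.prod_univ_succ]
    simp only [hD, Fin.cons_zero, Fin.cons_succ]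
    ring
  have hdet : (∑ σ : Equiv.Perm (Fin (n + 1)),
      ((Equiv.Perm.sign σ : ℤ) : ℝ) * ∏ i, D i (σ i)) = 0 := by
    have h1 : D.transpose.det = ∑ σ : Equiv.Perm (Fin (n + 1)),
        ((Equiv.Perm.sign σ : ℤ) : ℝ) * ∏ i, D i (σ i) := by
      rw [Matrix.det_apply]
      refine Finset.sum_congr rfl fun σ _ => ?_
      simp [Matrix.transpose_apply, Units.smul_def, zsmul_eq_mul]
    rw [← h1, Matrix.det_transpose]
    have hrow : D (τ⁻¹ ⟨k, hk⟩).succ = D 0 := by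
      funext b
      simp [hD, Fin.cons_zero, Fin.cons_succ, Equiv.Perm.inv_def, Equiv.apply_symm_apply]
    exact Matrix.det_zero_of_row_eq (Fin.succ_ne_zero _) hrow
  have hre : (∑ σ : Equiv.Perm (Fin (n + 1)),
        (((-1 : ℝ) ^ n * ((Equiv.Perm.sign σ : ℤ) : ℝ) * ((Equiv.Perm.sign τ : ℤ) : ℝ)) *
          ∏ j, MM n V (τ j) (σ j.succ)) * MM n V k ((σ 0 : Fin (n + 1)) : ℕ))
      = ((-1 : ℝ) ^ n * ((Equiv.Perm.sign τ : ℤ) : ℝ)) *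
        ∑ σ : Equiv.Perm (Fin (n + 1)),
          ((Equiv.Perm.sign σ : ℤ) : ℝ) * ∏ i, D i (σ i) := by
    rw [Finset.mul_sum]
    refine Finset.sum_congr rfl fun σ _ => ?_
    rw [← hterm σ]
    ring
  exact hre.trans (by rw [hdet, mul_zero])


end IntParts

section Pos

variable {n : ℕ} {V : ℝ → ℝ} (hn : 1 ≤ n) (hcont : Continuous V)
  (hg1 : Tendsto (fun x => V x / (|x| + 1)) atTop atTop)
  (hg2 : Tendsto (fun x => V x / (|x| + 1)) atBot atTop)

lemma eig_nonneg (lam : Fin n → ℝ) : 0 ≤ eigWeight V n lam := by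
  refine mul_nonneg (Finset.prod_nonneg fun p _ => ?_)
    (Finset.prod_nonneg fun j _ => (Real.exp_pos _).le)
  rcases le_total (lam p.1) (lam p.2) with h | h
  · exact mul_nonneg (sub_nonneg.mpr h) (sub_nonneg.mpr (Real.exp_le_exp.mpr h))
  · have h1 : lam p.2 - lam p.1 ≤ 0 := sub_nonpos.mpr h
    have h2 : Real.exp (lam p.2) - Real.exp (lam p.1) ≤ 0 :=
      sub_nonpos.mpr (Real.exp_le_exp.mpr h)
    have h3 := mul_nonneg (neg_nonneg.mpr h1) (neg_nonneg.mpr h2)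
    rwa [neg_mul_neg] at h3

include hcont in
lemma eig_cont : Continuous (eigWeight V n) := by
  apply Continuous.mul
  · apply continuous_finset_prod
    intro p _
    exact ((continuous_apply p.2).sub (continuous_apply p.1)).mul
      (((continuous_apply p.2).rexp).sub ((continuous_apply p.1).rexp))
  · apply continuous_finset_prod
    intro j _
    exact ((continuous_const.mul (hcont.comp (continuous_apply j))).rexp)

lemma eig_pos_pt : 0 < eigWeight V n (fun j => ((j : ℕ) : ℝ)) := by
  apply mul_pos
  · apply Finset.prod_pos
    intro p hp
    simp only [Finset.mem_filter, Finset.mem_univ, true_and] at hp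
    have hval : (p.1 : ℕ) < (p.2 : ℕ) := hp
    have hlt : (((p.1 : ℕ) : ℝ)) < (((p.2 : ℕ) : ℝ)) := by exact_mod_cast hval
    exact mul_pos (sub_pos.mpr hlt) (sub_pos.mpr (Real.exp_lt_exp.mpr hlt))
  · exact Finset.prod_pos fun j _ => Real.exp_pos _

include hn hcont hg1 hg2 in
lemma Zn_pos : 0 < Zn V n := by
  rw [Zn, integral_pos_iff_support_of_nonneg (fun lam => eig_nonneg lam)
    (eig_int hn hcont hg1 hg2)]
  have hopen : IsOpen {lam : Fin n → ℝ | 0 < eigWeight V n lam} :=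
    isOpen_lt continuous_const (eig_cont hcont)
  have hsub : {lam : Fin n → ℝ | 0 < eigWeight V n lam} ⊆ Function.support (eigWeight V n) :=
    fun lam h => ne_of_gt h
  refine lt_of_lt_of_le ?_ (measure_mono hsub)
  exact hopen.measure_pos volume ⟨_, eig_pos_pt⟩

end Pos

section Poly

variable {n : ℕ} {V : ℝ → ℝ} (hn : 1 ≤ n) (hcont : Continuous V)
  (hg1 : Tendsto (fun x => V x / (|x| + 1)) atTop atTop)
  (hg2 : Tendsto (fun x => V x / (|x| + 1)) atBot atTop)

lemma subset_expand (z : ℝ) (lam : Fin n → ℝ) :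
    (∏ j, (Real.exp z - Real.exp (lam j))) * eigWeight V n lam
      = ∑ t ∈ (Finset.univ : Finset (Fin n)).powerset,
          Real.exp z ^ t.card *
            ((∏ j ∈ Finset.univ \ t, (-Real.exp (lam j))) * eigWeight V n lam) := by
  have h0 : (∏ j, (Real.exp z - Real.exp (lam j)))
      = ∏ j, (Real.exp z + -Real.exp (lam j)) :=
    Finset.prod_congr rfl fun j _ => by ring
  rw [h0, Finset.prod_add, Finset.sum_mul]
  exact Finset.sum_congr rfl fun t _ => by rw [Finset.prod_const]; ring

lemma exp_ite_prod (t : Finset (Fin n)) (lam : Fin n → ℝ) :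
    (∏ j, Real.exp ((if j ∈ t then (0:ℝ) else 1) * lam j))
      = ∏ j ∈ Finset.univ \ t, Real.exp (lam j) := by
  have ha : ∀ j ∈ Finset.univ \ t,
      Real.exp ((if j ∈ t then (0:ℝ) else 1) * lam j) = Real.exp (lam j) := by
    intro j hj
    rw [Finset.mem_sdiff] at hj
    rw [if_neg hj.2, one_mul]
  have hb : ∀ j ∈ t, Real.exp ((if j ∈ t then (0:ℝ) else 1) * lam j) = 1 := by
    intro j hj
    rw [if_pos hj, zero_mul, Real.exp_zero]
  rw [← Finset.prod_sdiff (Finset.subset_univ t), Finset.prod_congr rfl ha,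
    Finset.prod_congr rfl hb, Finset.prod_const_one, mul_one]

lemma Ft_expand (t : Finset (Fin n)) (lam : Fin n → ℝ) :
    (∏ j ∈ Finset.univ \ t, (-Real.exp (lam j))) * eigWeight V n lam
      = ((-1 : ℝ) ^ (Finset.univ \ t).card) *
          ((∏ j, Real.exp ((if j ∈ t then (0:ℝ) else 1) * lam j)) * eigWeight V n lam) := by
  rw [exp_ite_prod]
  have h1 : (∏ j ∈ Finset.univ \ t, (-Real.exp (lam j)))
      = ((-1 : ℝ) ^ (Finset.univ \ t).card) * ∏ j ∈ Finset.univ \ t, Real.exp (lam j) := by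
    calc (∏ j ∈ Finset.univ \ t, (-Real.exp (lam j)))
        = ∏ j ∈ Finset.univ \ t, ((-1 : ℝ) * Real.exp (lam j)) :=
          Finset.prod_congr rfl fun j _ => by ring
      _ = (∏ _j ∈ Finset.univ \ t, (-1 : ℝ)) * ∏ j ∈ Finset.univ \ t, Real.exp (lam j) :=
          Finset.prod_mul_distrib
      _ = ((-1 : ℝ) ^ (Finset.univ \ t).card) * ∏ j ∈ Finset.univ \ t, Real.exp (lam j) := by
          rw [Finset.prod_const]
  rw [h1, mul_assoc]

include hn hcont hg1 hg2 in
lemma Ft_int (t : Finset (Fin n)) :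
    Integrable (fun lam : Fin n → ℝ =>
      (∏ j ∈ Finset.univ \ t, (-Real.exp (lam j))) * eigWeight V n lam) := by
  rw [show (fun lam : Fin n → ℝ =>
        (∏ j ∈ Finset.univ \ t, (-Real.exp (lam j))) * eigWeight V n lam)
      = fun lam => ((-1 : ℝ) ^ (Finset.univ \ t).card) *
          ((∏ j, Real.exp ((if j ∈ t then (0:ℝ) else 1) * lam j)) * eigWeight V n lam)
    from funext fun lam => Ft_expand t lam]
  exact (weightMul_int hn hcont hg1 hg2 _).const_mul _

end Poly

section Poly2

variable {n : ℕ} {V : ℝ → ℝ} (hn : 1 ≤ n) (hcont : Continuous V)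
  (hg1 : Tendsto (fun x => V x / (|x| + 1)) atTop atTop)
  (hg2 : Tendsto (fun x => V x / (|x| + 1)) atBot atTop)

/-- coefficients -/
noncomputable def Nt (n : ℕ) (V : ℝ → ℝ) (t : Finset (Fin n)) : ℝ :=
  ∫ lam : Fin n → ℝ, (∏ j ∈ Finset.univ \ t, (-Real.exp (lam j))) * eigWeight V n lam

include hn hcont hg1 hg2 in
lemma En_poly_eq (z : ℝ) :
    En V n z = ∑ t ∈ (Finset.univ : Finset (Fin n)).powerset,
      Real.exp z ^ t.card * Nt n V t := by
  rw [En, show (fun lam : Fin n → ℝ =>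
        (∏ j, (Real.exp z - Real.exp (lam j))) * eigWeight V n lam)
      = fun lam => ∑ t ∈ (Finset.univ : Finset (Fin n)).powerset,
          Real.exp z ^ t.card *
            ((∏ j ∈ Finset.univ \ t, (-Real.exp (lam j))) * eigWeight V n lam)
    from funext fun lam => subset_expand z lam]
  rw [integral_finset_sum _ fun t _ => (Ft_int hn hcont hg1 hg2 t).const_mul _]
  exact Finset.sum_congr rfl fun t _ => by rw [integral_const_mul]; rfl

lemma Nt_univ : Nt n V Finset.univ = Zn V n := by
  rw [Nt, Zn]
  congr 1
  funext lam
  simp [Finset.sdiff_self]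

include hn hcont hg1 hg2 in
lemma exists_Q : ∃ Q : Polynomial ℝ, Q.natDegree = n ∧ Q.leadingCoeff = Zn V n ∧
    ∀ z : ℝ, En V n z = Q.eval (Real.exp z) := by
  have hZ := Zn_pos hn hcont hg1 hg2
  refine ⟨∑ t ∈ (Finset.univ : Finset (Fin n)).powerset,
    Polynomial.C (Nt n V t) * Polynomial.X ^ t.card, ?_⟩
  set Q : Polynomial ℝ := ∑ t ∈ (Finset.univ : Finset (Fin n)).powerset,
    Polynomial.C (Nt n V t) * Polynomial.X ^ t.card with hQ
  have hcoeff : ∀ m : ℕ, Q.coeff m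
      = ∑ t ∈ (Finset.univ : Finset (Fin n)).powerset,
          if m = t.card then Nt n V t else 0 := by
    intro m
    rw [hQ, Polynomial.finset_sum_coeff]
    refine Finset.sum_congr rfl fun t _ => ?_
    rw [Polynomial.coeff_C_mul, Polynomial.coeff_X_pow, mul_ite, mul_one, mul_zero]
  have hcard : ∀ t : Finset (Fin n), t.card ≤ n := by
    intro t
    have := Finset.card_le_card (Finset.subset_univ t)
    simpa using this
  have hcoeffn : Q.coeff n = Zn V n := by
    rw [hcoeff n]
    rw [Finset.sum_eq_single Finset.univ]
    · rw [if_pos (by simp), Nt_univ]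
    · intro t _ ht
      rw [if_neg]
      intro hc
      exact ht (Finset.eq_univ_of_card t (by simpa using hc.symm))
    · intro h
      exact absurd (Finset.mem_powerset_self _) h
  have hhigh : ∀ m : ℕ, n < m → Q.coeff m = 0 := by
    intro m hm
    rw [hcoeff m]
    refine Finset.sum_eq_zero fun t _ => ?_
    rw [if_neg]
    intro hc
    exact absurd (hc ▸ hm) (not_lt.mpr (hcard t))
  have hdeg : Q.natDegree = n := by
    refine le_antisymm (Polynomial.natDegree_le_iff_coeff_eq_zero.mpr hhigh) ?_
    exact Polynomial.le_natDegree_of_ne_zero (hcoeffn ▸ ne_of_gt hZ)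
  refine ⟨hdeg, ?_, ?_⟩
  · rw [Polynomial.leadingCoeff, hdeg, hcoeffn]
  · intro z
    rw [En_poly_eq hn hcont hg1 hg2 z, hQ, Polynomial.eval_finset_sum]
    refine Finset.sum_congr rfl fun t _ => ?_
    rw [Polynomial.eval_mul, Polynomial.eval_C, Polynomial.eval_pow, Polynomial.eval_X]
    ring

end Poly2

end AvgAux

/-- **Proposition: `q_n` as an average.** For continuous `V` with superlinear
growth, all the integrals defining `Z'_n` and `E_n` are finite, `Z'_n > 0`, `E_n(z)` is a
polynomial of degree `n` in `e^z` with leading coefficient `Z'_n`, it satisfies the type I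
orthogonality conditions, and consequently `E_n(z)/Z'_n = q_n(e^z)` whenever `q_n` is the unique
monic degree-`n` polynomial satisfying these orthogonality conditions. -/
theorem average_is_type_I_polynomial
    (n : ℕ) (hn : 1 ≤ n) (V : ℝ → ℝ) (hcont : Continuous V)
    (hgrowth : Tendsto (fun x => V x / (|x| + 1)) atTop atTop ∧
      Tendsto (fun x => V x / (|x| + 1)) atBot atTop) :
    Integrable (eigWeight V n) ∧
    (∀ z : ℝ, Integrable (fun lam : Fin n → ℝ =>
      (∏ j, (Real.exp z - Real.exp (lam j))) * eigWeight V n lam)) ∧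
    0 < Zn V n ∧
    (∃ Q : Polynomial ℝ, Q.natDegree = n ∧ Q.leadingCoeff = Zn V n ∧
      ∀ z : ℝ, En V n z = Q.eval (Real.exp z)) ∧
    (∀ k < n, ∫ x : ℝ, x ^ k * En V n x * Real.exp (-(n : ℝ) * V x) = 0) ∧
    (∀ q : Polynomial ℝ, q.Monic → q.natDegree = n →
      (∀ k < n, ∫ x : ℝ, x ^ k * q.eval (Real.exp x) * Real.exp (-(n : ℝ) * V x) = 0) →
      (∀ q' : Polynomial ℝ, q'.Monic → q'.natDegree = n →
        (∀ k < n, ∫ x : ℝ, x ^ k * q'.eval (Real.exp x) * Real.exp (-(n : ℝ) * V x) = 0) →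
        q' = q) →
      ∀ z : ℝ, (1 / Zn V n) * En V n z = q.eval (Real.exp z)) := by
  obtain ⟨hg1, hg2⟩ := hgrowth
  have hZ : 0 < Zn V n := AvgAux.Zn_pos hn hcont hg1 hg2
  refine ⟨AvgAux.eig_int hn hcont hg1 hg2, fun z => AvgAux.Eint hn hcont hg1 hg2 z, hZ,
    AvgAux.exists_Q hn hcont hg1 hg2, fun k hk => AvgAux.orth hn hcont hg1 hg2 k hk, ?_⟩
  intro q hqm hqd hqorth huniq z
  obtain ⟨Q, hQdeg, hQlead, hQeval⟩ := AvgAux.exists_Q hn hcont hg1 hg2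
  set p : Polynomial ℝ := Polynomial.C (1 / Zn V n) * Q with hp
  have hc : (1 / Zn V n) ≠ 0 := by positivity
  have hpm : p.Monic := by
    rw [Polynomial.Monic, hp, Polynomial.leadingCoeff_mul, Polynomial.leadingCoeff_C, hQlead]
    field_simp
  have hpd : p.natDegree = n := by
    rw [hp, Polynomial.natDegree_C_mul hc, hQdeg]
  have hporth : ∀ k < n,
      ∫ x : ℝ, x ^ k * p.eval (Real.exp x) * Real.exp (-(n : ℝ) * V x) = 0 := by
    intro k hk
    have heq : (fun x : ℝ => x ^ k * p.eval (Real.exp x) * Real.exp (-(n : ℝ) * V x))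
        = fun x => (1 / Zn V n) * (x ^ k * En V n x * Real.exp (-(n : ℝ) * V x)) := by
      funext x
      rw [hp, Polynomial.eval_mul, Polynomial.eval_C, ← hQeval x]
      ring
    rw [heq, integral_const_mul, AvgAux.orth hn hcont hg1 hg2 k hk, mul_zero]
  have hpq : p = q := huniq p hpm hpd hporth
  rw [← hpq, hp, Polynomial.eval_mul, Polynomial.eval_C, ← hQeval z]
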